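/- In the setting of the previous bound (measurable A, B ⊆ ℝ^N with 0 < λ(A) < ∞, 0 < λ(B) < ∞; probability density ρ ∈ L²(ℝ^N); measurable F : A → ℝ^N with the support condition that for every x ∈ A, ρ(y − F(x)) = 0 for a.e. y ∉ B; Mori projection P on L²(A) with kernel K(x,z) = 1/λ(A) + Σ_{k=1}^M η_k(x)η_k(z) built from zero-mean orthonormal η_k; composition operator (G v)(x) = ∫_B ρ(y − F(x)) v(y) dy), suppose in addition A ⊆ Ω and B ⊆ Ω′ for measurable sets Ω, Ω′ of finite positive Lebesgue measure, and that for some κ with 0 ≤ κ < 1 one has ‖ρ‖²_{L²(ℝ^N)} ≤ κ/λ(Ω) + 1/λ(Ω′). Then ‖(I − P) ∘ G‖² ≤ κ; in particular (I − P) ∘ G is a contraction on L². -/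

import Mathlib

open MeasureTheory

section Aux
variable {α : Type*} [MeasurableSpace α] {μ : Measure α}

lemma L2_inner_eq' (f g : Lp ℝ 2 μ) : inner (𝕜 := ℝ) f g = ∫ a, f a * g a ∂μ := by
  rw [L2.inner_def]; simp [RCLike.inner_apply]
  exact integral_congr_ae (Filter.Eventually.of_forall fun a => mul_comm _ _)

lemma L2_mul_integrable' {f g : α → ℝ} (hf : MemLp f 2 μ) (hg : MemLp g 2 μ) :
    Integrable (fun a => f a * g a) μ := by
  have h := L2.integrable_inner (𝕜 := ℝ) (hf.toLp f) (hg.toLp g)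
  refine h.congr ?_
  filter_upwards [hf.coeFn_toLp, hg.coeFn_toLp] with a ha hb
  simp [ha, hb, RCLike.inner_apply, mul_comm]

lemma L2_cauchy_schwarz' {f g : α → ℝ} (hf : MemLp f 2 μ) (hg : MemLp g 2 μ) :
    (∫ a, f a * g a ∂μ) ^ 2 ≤ (∫ a, f a ^ 2 ∂μ) * (∫ a, g a ^ 2 ∂μ) := by
  have h1 : ∫ a, f a * g a ∂μ = inner (𝕜 := ℝ) (hf.toLp f) (hg.toLp g) := by
    rw [L2_inner_eq']
    refine integral_congr_ae ?_
    filter_upwards [hf.coeFn_toLp, hg.coeFn_toLp] with a ha hb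
    rw [ha, hb]
  have h2 : ∫ a, f a ^ 2 ∂μ = ‖hf.toLp f‖ ^ 2 := by
    rw [← real_inner_self_eq_norm_sq, L2_inner_eq']
    refine integral_congr_ae ?_
    filter_upwards [hf.coeFn_toLp] with a ha
    rw [ha]; ring
  have h3 : ∫ a, g a ^ 2 ∂μ = ‖hg.toLp g‖ ^ 2 := by
    rw [← real_inner_self_eq_norm_sq, L2_inner_eq']
    refine integral_congr_ae ?_
    filter_upwards [hg.coeFn_toLp] with a ha
    rw [ha]; ring
  rw [h1, h2, h3]
  have h := abs_real_inner_le_norm (hf.toLp f) (hg.toLp g)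
  have h' := abs_nonneg (inner (𝕜 := ℝ) (hf.toLp f) (hg.toLp g))
  nlinarith [sq_abs (inner (𝕜 := ℝ) (hf.toLp f) (hg.toLp g))]

lemma Lp_coeFn_finset_sum {ι : Type*} (s : Finset ι) (f : ι → Lp ℝ 2 μ) :
    ⇑(∑ i ∈ s, f i) =ᵐ[μ] fun x => ∑ i ∈ s, f i x := by
  classical
  induction s using Finset.induction_on with
  | empty => simp only [Finset.sum_empty]; exact Lp.coeFn_zero ℝ 2 μ
  | insert a s hnot ih =>
      rw [Finset.sum_insert hnot]
      filter_upwards [Lp.coeFn_add (f a) (∑ i ∈ s, f i), ih] with x hx hx2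
      simp only [hx, Pi.add_apply, hx2, Finset.sum_insert hnot]

end Aux

set_option maxHeartbeats 2000000 in
theorem mori_projected_operator_contraction
    (N M : ℕ) (hN : 1 ≤ N)
    (A B : Set (Fin N → ℝ)) (hAmeas : MeasurableSet A) (hBmeas : MeasurableSet B)
    (hA0 : 0 < volume A) (hAfin : volume A < ⊤)
    (hB0 : 0 < volume B) (hBfin : volume B < ⊤)
    (ρ : (Fin N → ℝ) → ℝ) (hρmeas : Measurable ρ) (hρnn : ∀ z, 0 ≤ ρ z)
    (hρint : ∫ z, ρ z = 1) (hρL2 : MemLp ρ 2 volume)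
    (F : (Fin N → ℝ) → (Fin N → ℝ)) (hF : Measurable F)
    (hsupp : ∀ x ∈ A, ∀ᵐ y ∂volume, y ∉ B → ρ (y - F x) = 0)
    (η : Fin M → (Fin N → ℝ) → ℝ)
    (hηL2 : ∀ k, MemLp (η k) 2 (volume.restrict A))
    (hmean : ∀ k, ∫ x in A, η k x = 0)
    (horth : ∀ i j, ∫ x in A, η i x * η j x = if i = j then (1 : ℝ) else 0)
    (K : (Fin N → ℝ) → (Fin N → ℝ) → ℝ)
    (hK : ∀ x z, K x z = 1 / (volume A).toReal + ∑ k, η k x * η k z)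
    (G : Lp ℝ 2 (volume.restrict B) →L[ℝ] Lp ℝ 2 (volume.restrict A))
    (hG : ∀ v, ∀ᵐ x ∂volume.restrict A, G v x = ∫ y in B, ρ (y - F x) * v y)
    (P : Lp ℝ 2 (volume.restrict A) →L[ℝ] Lp ℝ 2 (volume.restrict A))
    (hP : ∀ f, ∀ᵐ x ∂volume.restrict A, P f x = ∫ z in A, K x z * f z)
    (Ω Ω' : Set (Fin N → ℝ)) (hΩmeas : MeasurableSet Ω) (hΩ'meas : MeasurableSet Ω')
    (hAΩ : A ⊆ Ω) (hBΩ' : B ⊆ Ω')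
    (hΩ0 : 0 < volume Ω) (hΩfin : volume Ω < ⊤)
    (hΩ'0 : 0 < volume Ω') (hΩ'fin : volume Ω' < ⊤)
    (κ : ℝ) (hκ0 : 0 ≤ κ) (hκ1 : κ < 1)
    (hρbound : ∫ z, ρ z ^ 2 ≤ κ / (volume Ω).toReal + 1 / (volume Ω').toReal) :
    ‖(ContinuousLinearMap.id ℝ (Lp ℝ 2 (volume.restrict A)) - P).comp G‖ ^ 2 ≤ κ
      ∧ ‖(ContinuousLinearMap.id ℝ (Lp ℝ 2 (volume.restrict A)) - P).comp G‖ < 1 := by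
  classical
  haveI hfinA : IsFiniteMeasure (volume.restrict A) :=
    ⟨by rwa [Measure.restrict_apply_univ]⟩
  haveI hfinB : IsFiniteMeasure (volume.restrict B) :=
    ⟨by rwa [Measure.restrict_apply_univ]⟩
  set lA := (volume A).toReal with hlAdef
  set lB := (volume B).toReal with hlBdef
  set lΩ := (volume Ω).toReal with hlΩdef
  set lΩ' := (volume Ω').toReal with hlΩ'def
  have hlA : 0 < lA := ENNReal.toReal_pos hA0.ne' hAfin.ne
  have hlB : 0 < lB := ENNReal.toReal_pos hB0.ne' hBfin.ne
  have hlΩ : 0 < lΩ := ENNReal.toReal_pos hΩ0.ne' hΩfin.ne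
  have hlΩ' : 0 < lΩ' := ENNReal.toReal_pos hΩ'0.ne' hΩ'fin.ne
  have hlAΩ : lA ≤ lΩ := ENNReal.toReal_le_toReal hAfin.ne hΩfin.ne |>.mpr
    (measure_mono hAΩ) |>.trans_eq rfl
  have hlBΩ' : lB ≤ lΩ' := ENNReal.toReal_le_toReal hBfin.ne hΩ'fin.ne |>.mpr
    (measure_mono hBΩ')
  -- Lp elements
  set e0 : Lp ℝ 2 (volume.restrict A) := (memLp_const (1 : ℝ)).toLp _ with he0def
  set e : Fin M → Lp ℝ 2 (volume.restrict A) := fun k => (hηL2 k).toLp (η k) with hedef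
  have he0 : ⇑e0 =ᵐ[volume.restrict A] fun _ => (1 : ℝ) := MemLp.coeFn_toLp _
  have hek : ∀ k, ⇑(e k) =ᵐ[volume.restrict A] η k := fun k => MemLp.coeFn_toLp _
  -- total measure fact
  have hμAuniv : (volume.restrict A).real Set.univ = lA := by
    rw [measureReal_def, Measure.restrict_apply_univ]
  have hμBuniv : (volume.restrict B).real Set.univ = lB := by
    rw [measureReal_def, Measure.restrict_apply_univ]
  -- inner products
  have inner00 : inner (𝕜 := ℝ) e0 e0 = lA := by
    rw [L2_inner_eq']
    have : (fun a => e0 a * e0 a) =ᵐ[volume.restrict A] fun _ => (1 : ℝ) := by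
      filter_upwards [he0] with a ha; simp [ha]
    rw [integral_congr_ae this, integral_const, smul_eq_mul, hμAuniv, mul_one]
  have inner0k : ∀ k, inner (𝕜 := ℝ) e0 (e k) = 0 := by
    intro k
    rw [L2_inner_eq']
    have : (fun a => e0 a * e k a) =ᵐ[volume.restrict A] fun a => η k a := by
      filter_upwards [he0, hek k] with a ha hb; simp [ha, hb]
    rw [integral_congr_ae this]; exact hmean k
  have innerkk : ∀ i j, inner (𝕜 := ℝ) (e i) (e j) = if i = j then (1 : ℝ) else 0 := by
    intro i j
    rw [L2_inner_eq']
    have : (fun a => e i a * e j a) =ᵐ[volume.restrict A] fun a => η i a * η j a := by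
      filter_upwards [hek i, hek j] with a ha hb; simp [ha, hb]
    rw [integral_congr_ae this]; exact horth i j
  -- projection formula
  have hPq : ∀ h : Lp ℝ 2 (volume.restrict A),
      P h = ((inner (𝕜 := ℝ) e0 h) / lA) • e0 + ∑ k, (inner (𝕜 := ℝ) (e k) h) • e k := by
    intro h
    apply Lp.ext
    have hint : Integrable (⇑h) (volume.restrict A) := (Lp.memLp h).integrable one_le_two
    have hkint : ∀ k, Integrable (fun z => η k z * h z) (volume.restrict A) :=
      fun k => L2_mul_integrable' (hηL2 k) (Lp.memLp h)
    have hform : ∀ x, ∫ z in A, K x z * h z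
        = (∫ z in A, h z) / lA + ∑ k, (∫ z in A, η k z * h z) * η k x := by
      intro x
      have : ∀ z, K x z * h z = (1 / lA) * h z + ∑ k, η k x * (η k z * h z) := by
        intro z; rw [hK x z, add_mul, Finset.sum_mul]
        congr 1
        exact Finset.sum_congr rfl fun k _ => by ring
      simp_rw [this]
      rw [integral_add (hint.const_mul _)
        (integrable_finset_sum _ fun k _ => (hkint k).const_mul _),
        integral_finset_sum _ fun k _ => (hkint k).const_mul _]
      congr 1
      · rw [integral_const_mul]; ring
      · refine Finset.sum_congr rfl fun k _ => ?_
        rw [integral_const_mul]; ring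
    -- inner products as integrals
    have hin0 : inner (𝕜 := ℝ) e0 h = ∫ z in A, h z := by
      rw [L2_inner_eq']
      refine integral_congr_ae ?_
      filter_upwards [he0] with a ha; simp [ha]
    have hink : ∀ k, inner (𝕜 := ℝ) (e k) h = ∫ z in A, η k z * h z := by
      intro k; rw [L2_inner_eq']
      refine integral_congr_ae ?_
      filter_upwards [hek k] with a ha; simp [ha]
    -- coeFn of RHS
    have hrhs : ⇑(((inner (𝕜 := ℝ) e0 h) / lA) • e0 + ∑ k, (inner (𝕜 := ℝ) (e k) h) • e k)
        =ᵐ[volume.restrict A]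
        fun x => (∫ z in A, h z) / lA + ∑ k, (∫ z in A, η k z * h z) * η k x := by
      have hsum : ⇑(∑ k : Fin M, (inner (𝕜 := ℝ) (e k) h) • e k)
          =ᵐ[volume.restrict A] fun x => ∑ k : Fin M, (inner (𝕜 := ℝ) (e k) h) * η k x := by
        have := Lp_coeFn_finset_sum (Finset.univ : Finset (Fin M))
          (fun k => (inner (𝕜 := ℝ) (e k) h) • e k)
        refine this.trans ?_
        have hall : ∀ k : Fin M, ⇑((inner (𝕜 := ℝ) (e k) h) • e k)
            =ᵐ[volume.restrict A] fun x => (inner (𝕜 := ℝ) (e k) h) * η k x := by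
          intro k
          filter_upwards [Lp.coeFn_smul (inner (𝕜 := ℝ) (e k) h) (e k), hek k] with x hx hx2
          simp [hx, hx2]
        have : ∀ᵐ x ∂(volume.restrict A), ∀ k : Fin M,
            ((inner (𝕜 := ℝ) (e k) h) • e k) x = (inner (𝕜 := ℝ) (e k) h) * η k x :=
          ae_all_iff.2 hall
        filter_upwards [this] with x hx
        exact Finset.sum_congr rfl fun k _ => hx k
      filter_upwards [Lp.coeFn_add (((inner (𝕜 := ℝ) e0 h) / lA) • e0)
        (∑ k, (inner (𝕜 := ℝ) (e k) h) • e k),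
        Lp.coeFn_smul ((inner (𝕜 := ℝ) e0 h) / lA) e0, he0, hsum] with x h1 h2 h3 h4
      rw [h1]
      simp only [Pi.add_apply, h2, Pi.smul_apply, h3, smul_eq_mul, mul_one, h4]
      simp only [hin0, hink]
    have h1 : ⇑(P h) =ᵐ[volume.restrict A] fun x => ∫ z in A, K x z * h z := hP h
    exact h1.trans ((Filter.EventuallyEq.of_eq (funext hform)).trans hrhs.symm)
  -- key inequality: ‖h - P h‖² ≤ ‖h‖²
  have hinnerPP : ∀ h : Lp ℝ 2 (volume.restrict A),
      inner (𝕜 := ℝ) h (P h) = (inner (𝕜 := ℝ) e0 h) ^ 2 / lA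
        + ∑ k, (inner (𝕜 := ℝ) (e k) h) ^ 2 := by
    intro h
    rw [hPq h, inner_add_right, inner_smul_right, inner_sum]
    simp_rw [inner_smul_right]
    rw [real_inner_comm h e0]
    congr 1
    · field_simp
    · refine Finset.sum_congr rfl fun k _ => ?_
      rw [real_inner_comm h (e k)]; ring
  have hnormP : ∀ h : Lp ℝ 2 (volume.restrict A),
      inner (𝕜 := ℝ) (P h) (P h) = (inner (𝕜 := ℝ) e0 h) ^ 2 / lA
        + ∑ k, (inner (𝕜 := ℝ) (e k) h) ^ 2 := by
    intro h
    set a := (inner (𝕜 := ℝ) e0 h) / lA with ha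
    set b := fun k => inner (𝕜 := ℝ) (e k) h with hb
    have inner0k' : ∀ k, inner (𝕜 := ℝ) (e k) e0 = 0 := fun k => by
      rw [real_inner_comm]; exact inner0k k
    rw [hPq h]
    simp only [inner_add_left, inner_add_right, sum_inner, inner_sum,
      real_inner_smul_left, real_inner_smul_right, inner00, inner0k, inner0k', innerkk,
      mul_zero, zero_mul, Finset.sum_const_zero, add_zero, zero_add, mul_ite, mul_one]
    congr 1
    · field_simp
    · refine Finset.sum_congr rfl fun k _ => ?_
      simp [Finset.sum_ite_eq, sq]
  have hcontr : ∀ h : Lp ℝ 2 (volume.restrict A), ‖h - P h‖ ^ 2 ≤ ‖h‖ ^ 2 := by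
    intro h
    have hq : ‖P h‖ ^ 2 = inner (𝕜 := ℝ) h (P h) := by
      rw [← real_inner_self_eq_norm_sq, hnormP h, hinnerPP h]
    have hpos : (0:ℝ) ≤ inner (𝕜 := ℝ) h (P h) := by
      rw [hinnerPP h]
      have : (0:ℝ) ≤ ∑ k, (inner (𝕜 := ℝ) (e k) h) ^ 2 :=
        Finset.sum_nonneg fun k _ => sq_nonneg _
      positivity
    rw [norm_sub_sq_real, hq]
    linarith
  have hPe0 : P e0 = e0 := by
    rw [hPq e0, inner00]
    have : ∀ k : Fin M, inner (𝕜 := ℝ) (e k) e0 = 0 := fun k => by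
      rw [real_inner_comm]; exact inner0k k
    simp [this, div_self hlA.ne']
  -- integrability of ρ
  have hρint1 : Integrable ρ volume := by
    by_contra hc
    rw [integral_undef hc] at hρint
    norm_num at hρint
  -- main estimate
  have key : ∀ v : Lp ℝ 2 (volume.restrict B),
      ‖G v - P (G v)‖ ≤ Real.sqrt κ * ‖v‖ := by
    intro v
    set c : ℝ := (∫ y in B, v y) / lB with hc
    set h : Lp ℝ 2 (volume.restrict A) := G v - c • e0 with hh
    have hsplit : G v - P (G v) = h - P h := by
      rw [hh]
      rw [map_sub, ContinuousLinearMap.map_smul, hPe0]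
      abel
    -- facts about v
    have hv2 : MemLp (⇑v) 2 (volume.restrict B) := Lp.memLp v
    have hvint : Integrable (⇑v) (volume.restrict B) := hv2.integrable one_le_two
    have hvmean : ∫ y in B, v y = c * lB := by
      rw [hc, div_mul_cancel₀ _ hlB.ne']
    have hvsqint : Integrable (fun y => v y ^ 2) (volume.restrict B) := hv2.integrable_sq
    set W : (Fin N → ℝ) → ℝ := fun y => v y - c with hW
    have hW2 : MemLp W 2 (volume.restrict B) := hv2.sub (memLp_const c)
    have hWsqint : Integrable (fun y => W y ^ 2) (volume.restrict B) := hW2.integrable_sq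
    have hWsq : ∫ y in B, W y ^ 2 = (∫ y in B, v y ^ 2) - c ^ 2 * lB := by
      have : ∀ y, W y ^ 2 = v y ^ 2 - 2 * c * v y + c ^ 2 := by
        intro y; rw [hW]; ring
      simp_rw [this]
      have i1 : Integrable (fun y => v y ^ 2 - 2 * c * v y) (volume.restrict B) :=
        hvsqint.sub (hvint.const_mul _)
      rw [integral_add i1 (integrable_const _)]
      rw [integral_sub hvsqint (hvint.const_mul _)]
      rw [integral_const_mul]
      rw [hvmean]
      rw [integral_const, smul_eq_mul, hμBuniv]
      ring
    have hWnn : (0:ℝ) ≤ ∫ y in B, W y ^ 2 :=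
      integral_nonneg fun y => sq_nonneg _
    have hWle : ∫ y in B, W y ^ 2 ≤ ∫ y in B, v y ^ 2 := by
      rw [hWsq]; nlinarith [sq_nonneg c]
    -- pointwise bound
    have hptwise : ∀ x ∈ A,
        ((∫ y in B, ρ (y - F x) * v y) - c) ^ 2 ≤ κ / lΩ * ∫ y in B, W y ^ 2 := by
      intro x hx
      set g : (Fin N → ℝ) → ℝ := fun y => ρ (y - F x) with hg
      have hmp : MeasurePreserving (fun y : Fin N → ℝ => y - F x) volume volume :=
        measurePreserving_sub_right volume (F x)
      have hgL2 : MemLp g 2 volume := hρL2.comp_measurePreserving hmp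
      have hgL2B : MemLp g 2 (volume.restrict B) := hgL2.restrict B
      have hgintB : Integrable g (volume.restrict B) := hgL2B.integrable one_le_two
      have hgsqint : Integrable (fun y => g y ^ 2) volume := hgL2.integrable_sq
      have hgB1 : ∫ y in B, g y = 1 := by
        rw [setIntegral_eq_integral_of_ae_compl_eq_zero (hsupp x hx)]
        rw [integral_sub_right_eq_self ρ (F x)]
        exact hρint
      have hgsqB : ∫ y in B, g y ^ 2 ≤ κ / lΩ + 1 / lΩ' := by
        refine le_trans (setIntegral_le_integral hgsqint
          (Filter.Eventually.of_forall fun y => sq_nonneg _)) ?_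
        simp only [hg]
        rw [integral_sub_right_eq_self (fun z => ρ z ^ 2) (F x)]
        exact hρbound
      set d : ℝ := 1 / lΩ' with hd
      have hgv_int : Integrable (fun y => g y * v y) (volume.restrict B) :=
        L2_mul_integrable' hgL2B hv2
      have halg : (∫ y in B, ρ (y - F x) * v y) - c
          = ∫ y in B, (g y - d) * W y := by
        have : ∀ y, (g y - d) * W y = g y * v y - c * g y - d * v y + d * c := by
          intro y; rw [hW]; ring
        simp_rw [this]
        have i1 : Integrable (fun y => g y * v y - c * g y) (volume.restrict B) :=
          hgv_int.sub (hgintB.const_mul _)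
        have i2 : Integrable (fun y => g y * v y - c * g y - d * v y) (volume.restrict B) :=
          i1.sub (hvint.const_mul _)
        rw [integral_add i2 (integrable_const _), integral_sub i1 (hvint.const_mul _),
          integral_sub hgv_int (hgintB.const_mul _),
          integral_const_mul, integral_const_mul, hgB1, hvmean,
          integral_const, smul_eq_mul, hμBuniv]
        ring
      have hCS : (∫ y in B, (g y - d) * W y) ^ 2
          ≤ (∫ y in B, (g y - d) ^ 2) * ∫ y in B, W y ^ 2 :=
        L2_cauchy_schwarz' (hgL2B.sub (memLp_const d)) hW2
      have hGsq : ∫ y in B, (g y - d) ^ 2 ≤ κ / lΩ := by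
        have : ∀ y, (g y - d) ^ 2 = g y ^ 2 - 2 * d * g y + d ^ 2 := by
          intro y; ring
        simp_rw [this]
        have i1 : Integrable (fun y => g y ^ 2 - 2 * d * g y) (volume.restrict B) :=
          (hgL2B.integrable_sq).sub (hgintB.const_mul _)
        rw [integral_add i1 (integrable_const _),
          integral_sub (hgL2B.integrable_sq) (hgintB.const_mul _),
          integral_const_mul, hgB1, integral_const, smul_eq_mul, hμBuniv]
        have hdd : d ^ 2 * lB ≤ d ^ 2 * lΩ' := by nlinarith [sq_nonneg d]
        have hd2 : d ^ 2 * lΩ' = d := by rw [hd]; field_simp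
        have := hgsqB
        rw [hd]
        rw [hd] at hdd hd2
        nlinarith
      rw [halg]
      calc (∫ y in B, (g y - d) * W y) ^ 2
          ≤ (∫ y in B, (g y - d) ^ 2) * ∫ y in B, W y ^ 2 := hCS
        _ ≤ κ / lΩ * ∫ y in B, W y ^ 2 := by
            apply mul_le_mul_of_nonneg_right hGsq hWnn
    -- coeFn of h
    have hcoe : ⇑h =ᵐ[volume.restrict A]
        fun x => (∫ y in B, ρ (y - F x) * v y) - c := by
      rw [hh]
      filter_upwards [Lp.coeFn_sub (G v) (c • e0), Lp.coeFn_smul c e0, he0, hG v]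
        with x h1 h2 h3 h4
      rw [h1]
      simp only [Pi.sub_apply, h2, Pi.smul_apply, h3, smul_eq_mul, mul_one, h4]
    -- norm of h
    have hnormh : ‖h‖ ^ 2 = ∫ x in A, (h x) ^ 2 := by
      rw [← real_inner_self_eq_norm_sq, L2_inner_eq']
      exact integral_congr_ae (Filter.Eventually.of_forall fun x => by ring)
    have hhsqint : Integrable (fun x => (h x) ^ 2) (volume.restrict A) :=
      (Lp.memLp h).integrable_sq
    have hbound : ‖h‖ ^ 2 ≤ κ * ‖v‖ ^ 2 := by
      have hae : ∀ᵐ x ∂(volume.restrict A),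
          (h x) ^ 2 ≤ κ / lΩ * ∫ y in B, W y ^ 2 := by
        filter_upwards [hcoe, ae_restrict_mem hAmeas] with x h1 h2
        rw [h1]
        exact hptwise x h2
      have h1 : ∫ x in A, (h x) ^ 2 ≤ lA * (κ / lΩ * ∫ y in B, W y ^ 2) := by
        refine le_trans (integral_mono_ae hhsqint (integrable_const _) hae) ?_
        rw [integral_const, smul_eq_mul, hμAuniv]
      have h2 : lA * (κ / lΩ * ∫ y in B, W y ^ 2) ≤ κ * ∫ y in B, W y ^ 2 := by
        have h3 : lA * (κ / lΩ * ∫ y in B, W y ^ 2)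
            ≤ lΩ * (κ / lΩ * ∫ y in B, W y ^ 2) := by
          apply mul_le_mul_of_nonneg_right hlAΩ
          positivity
        have h4 : lΩ * (κ / lΩ * ∫ y in B, W y ^ 2) = κ * ∫ y in B, W y ^ 2 := by
          field_simp
        linarith
      have hvnorm : ‖v‖ ^ 2 = ∫ y in B, (v y) ^ 2 := by
        rw [← real_inner_self_eq_norm_sq, L2_inner_eq']
        exact integral_congr_ae (Filter.Eventually.of_forall fun x => by ring)
      have h5 : κ * ∫ y in B, W y ^ 2 ≤ κ * ‖v‖ ^ 2 := by
        rw [hvnorm]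
        exact mul_le_mul_of_nonneg_left hWle hκ0
      rw [hnormh]
      linarith
    -- conclude
    have hfinal : ‖G v - P (G v)‖ ^ 2 ≤ (Real.sqrt κ * ‖v‖) ^ 2 := by
      rw [hsplit]
      refine le_trans (hcontr h) ?_
      rw [mul_pow, Real.sq_sqrt hκ0]
      exact hbound
    have h6 : (0:ℝ) ≤ Real.sqrt κ * ‖v‖ := by positivity
    nlinarith [norm_nonneg (G v - P (G v))]
  -- operator norm
  set T := (ContinuousLinearMap.id ℝ (Lp ℝ 2 (volume.restrict A)) - P).comp G with hT
  have hTapp : ∀ v, T v = G v - P (G v) := by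
    intro v
    simp [hT, ContinuousLinearMap.comp_apply, ContinuousLinearMap.sub_apply]
  have hTnorm : ‖T‖ ≤ Real.sqrt κ := by
    refine ContinuousLinearMap.opNorm_le_bound T (Real.sqrt_nonneg κ) fun v => ?_
    rw [hTapp v]
    exact key v
  constructor
  · have hle : ‖T‖ ^ 2 ≤ (Real.sqrt κ) ^ 2 := pow_le_pow_left₀ (norm_nonneg T) hTnorm 2
    rwa [Real.sq_sqrt hκ0] at hle
  · refine lt_of_le_of_lt hTnorm ?_
    rw [show (1:ℝ) = Real.sqrt 1 from (Real.sqrt_one).symm]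
    exact Real.sqrt_lt_sqrt hκ0 hκ1
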